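/- If Q(x,y,z) = A x^4 + B y^4 + C z^4 + D x^2 y^2 + E x^2 z^2 + F y^2 z^2 satisfies Hess(Q) = x^2 y^2 z^2 as polynomials, then exactly one of the following holds: (1) D=E=F=0 and 1728ABC=1; (2) A=B=E=F=0 and 144CD²=−1; (3) A=C=D=F=0 and 144BE²=−1; (4) B=C=D=E=0 and 144AF²=−1. -/
import Mathlib


open MvPolynomial

/-- The Hessian determinant of a polynomial in three variables. -/
noncomputable def hessian (f : MvPolynomial (Fin 3) ℂ) : MvPolynomial (Fin 3) ℂ :=
  Matrix.det (Matrix.of fun i j : Fin 3 => pderiv i (pderiv j f))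

/-- If `Hess Q = x²y²z²` for `Q = A x⁴ + B y⁴ + C z⁴ + D x²y² + E x²z² + F y²z²`,
then exactly one of the four listed sets of conditions holds. -/
theorem hessian_eq_xyz_sq_cases (A B C' D E F : ℂ)
    (h : hessian (MvPolynomial.C A * X 0 ^ 4 + MvPolynomial.C B * X 1 ^ 4 +
        MvPolynomial.C C' * X 2 ^ 4 + MvPolynomial.C D * X 0 ^ 2 * X 1 ^ 2 +
        MvPolynomial.C E * X 0 ^ 2 * X 2 ^ 2 + MvPolynomial.C F * X 1 ^ 2 * X 2 ^ 2) =
      X 0 ^ 2 * X 1 ^ 2 * X 2 ^ 2) :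
    ∃! i : Fin 4,
      ![D = 0 ∧ E = 0 ∧ F = 0 ∧ 1728 * A * B * C' = 1,
        A = 0 ∧ B = 0 ∧ E = 0 ∧ F = 0 ∧ 144 * C' * D ^ 2 = -1,
        A = 0 ∧ C' = 0 ∧ D = 0 ∧ F = 0 ∧ 144 * B * E ^ 2 = -1,
        B = 0 ∧ C' = 0 ∧ D = 0 ∧ E = 0 ∧ 144 * A * F ^ 2 = -1] i := by
  rw [hessian, Matrix.det_fin_three] at h
  simp only [Matrix.of_apply] at h
  simp [pderiv_C_mul, ← map_ofNat (MvPolynomial.C (σ := Fin 3) (R := ℂ)) 4,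
    ← map_ofNat (MvPolynomial.C (σ := Fin 3) (R := ℂ)) 3,
    ← map_ofNat (MvPolynomial.C (σ := Fin 3) (R := ℂ)) 2] at h
  -- evaluate at ten points
  have hp1 := congrArg (MvPolynomial.eval ![1, 0, 0]) h
  have hp2 := congrArg (MvPolynomial.eval ![0, 1, 0]) h
  have hp3 := congrArg (MvPolynomial.eval ![0, 0, 1]) h
  have hp4 := congrArg (MvPolynomial.eval ![1, 1, 0]) h
  have hp5 := congrArg (MvPolynomial.eval ![2, 1, 0]) h
  have hp6 := congrArg (MvPolynomial.eval ![1, 0, 1]) h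
  have hp7 := congrArg (MvPolynomial.eval ![2, 0, 1]) h
  have hp8 := congrArg (MvPolynomial.eval ![0, 1, 1]) h
  have hp9 := congrArg (MvPolynomial.eval ![0, 2, 1]) h
  have hp10 := congrArg (MvPolynomial.eval ![1, 1, 1]) h
  simp only [map_add, map_sub, map_mul, map_pow, map_ofNat, eval_C, eval_X,
    Matrix.cons_val_zero, Matrix.cons_val_one, Matrix.head_cons,
    Matrix.cons_val_two, Matrix.tail_cons] at hp1 hp2 hp3 hp4 hp5 hp6 hp7 hp8 hp9 hp10
  norm_num at hp1 hp2 hp3 hp4 hp5 hp6 hp7 hp8 hp9 hp10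
  -- the ten coefficient equations
  have q1 : A * D * E = 0 := by rcases hp1 with (h' | h') | h' <;> rw [h'] <;> ring
  have q2 : B * D * F = 0 := by rcases hp2 with (h' | h') | h' <;> rw [h'] <;> ring
  have q3 : C' * E * F = 0 := by rcases hp3 with (h' | h') | h' <;> rw [h'] <;> ring
  have e4 : -24 * D ^ 2 * E + 48 * A * D * F + 288 * A * B * E = 0 := by
    linear_combination (-240 : ℂ) * q1 + (12 : ℂ) * q2 + (-1/3 : ℂ) * hp4 + (1/12 : ℂ) * hp5
  have e5 : -24 * D ^ 2 * F + 48 * B * D * E + 288 * A * B * F = 0 := by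
    linear_combination (192 : ℂ) * q1 + (-60 : ℂ) * q2 + (4/3 : ℂ) * hp4 + (-1/12 : ℂ) * hp5
  have e6 : -24 * D * E ^ 2 + 48 * A * E * F + 288 * A * C' * D = 0 := by
    linear_combination (-240 : ℂ) * q1 + (12 : ℂ) * q3 + (-1/3 : ℂ) * hp6 + (1/12 : ℂ) * hp7
  have e7 : -24 * E ^ 2 * F + 48 * C' * D * E + 288 * A * C' * F = 0 := by
    linear_combination (192 : ℂ) * q1 + (-60 : ℂ) * q3 + (4/3 : ℂ) * hp6 + (-1/12 : ℂ) * hp7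
  have e8 : -24 * D * F ^ 2 + 48 * B * E * F + 288 * B * C' * D = 0 := by
    linear_combination (-240 : ℂ) * q2 + (12 : ℂ) * q3 + (-1/3 : ℂ) * hp8 + (1/12 : ℂ) * hp9
  have e9 : -24 * E * F ^ 2 + 48 * C' * D * F + 288 * B * C' * E = 0 := by
    linear_combination (192 : ℂ) * q2 + (-60 : ℂ) * q3 + (4/3 : ℂ) * hp8 + (-1/12 : ℂ) * hp9
  have e10 : 144 * D * E * F - 144 * C' * D ^ 2 - 144 * B * E ^ 2 - 144 * A * F ^ 2
      + 1728 * A * B * C' = 1 := by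
    linear_combination (48 : ℂ) * q1 + (48 : ℂ) * q2 + (48 : ℂ) * q3 - hp4 - hp6 - hp8 + hp10
  clear h
  -- case analysis
  by_cases hD : D = 0 <;> by_cases hE : E = 0 <;> by_cases hF : F = 0
  · -- D = E = F = 0 : case 0
    subst hD; subst hE; subst hF
    refine ⟨0, ⟨rfl, rfl, rfl, by linear_combination e10⟩, ?_⟩
    intro j hj
    fin_cases j
    · rfl
    · exact absurd hj.2.2.2.2 (by norm_num)
    · exact absurd hj.2.2.2.2 (by norm_num)
    · exact absurd hj.2.2.2.2 (by norm_num)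
  · -- D = 0, E = 0, F ≠ 0 : case 3
    subst hD; subst hE
    have hAB : A * B = 0 := by
      have : 288 * A * B * F = 0 := by linear_combination e5
      simpa [hF, mul_eq_zero] using this
    have hAC : A * C' = 0 := by
      have : 288 * A * C' * F = 0 := by linear_combination e7
      simpa [hF, mul_eq_zero] using this
    have hA : A ≠ 0 := by
      intro hA
      rw [hA] at e10
      norm_num at e10
    have hB : B = 0 := (mul_eq_zero.1 hAB).resolve_left hA
    have hC : C' = 0 := (mul_eq_zero.1 hAC).resolve_left hA
    refine ⟨3, ⟨hB, hC, rfl, rfl, by rw [hB, hC] at e10; linear_combination -e10⟩, ?_⟩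
    intro j hj
    fin_cases j
    · exact absurd hj.2.2.1 hF
    · exact absurd hj.2.2.2.1 hF
    · exact absurd hj.2.2.2.1 hF
    · rfl
  · -- D = 0, E ≠ 0, F = 0 : case 2
    subst hD; subst hF
    have hAB : A * B = 0 := by
      have : 288 * A * B * E = 0 := by linear_combination e4
      simpa [hE, mul_eq_zero] using this
    have hBC : B * C' = 0 := by
      have : 288 * B * C' * E = 0 := by linear_combination e9
      simpa [hE, mul_eq_zero] using this
    have hB : B ≠ 0 := by
      intro hB
      rw [hB] at e10
      norm_num at e10
    have hA : A = 0 := (mul_eq_zero.1 hAB).resolve_right hB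
    have hC : C' = 0 := (mul_eq_zero.1 hBC).resolve_left hB
    refine ⟨2, ⟨hA, hC, rfl, rfl, by rw [hA, hC] at e10; linear_combination -e10⟩, ?_⟩
    intro j hj
    fin_cases j
    · exact absurd hj.2.1 hE
    · exact absurd hj.2.2.1 hE
    · rfl
    · exact absurd hj.2.2.2.1 hE
  · -- D = 0, E ≠ 0, F ≠ 0 : contradiction
    exfalso
    have hC : C' = 0 := by
      rcases hp3 with (h' | h') | h'
      exacts [absurd h' hE, absurd h' hF, h']
    rw [hC] at e7
    have : E ^ 2 * F = 0 := by linear_combination (-1/24 : ℂ) * e7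
    rcases mul_eq_zero.1 this with h' | h'
    · exact hE (pow_eq_zero_iff (by norm_num) |>.1 h')
    · exact hF h'
  · -- D ≠ 0, E = 0, F = 0 : case 1
    subst hE; subst hF
    have hAC : A * C' = 0 := by
      have : 288 * A * C' * D = 0 := by linear_combination e6
      simpa [hD, mul_eq_zero] using this
    have hBC : B * C' = 0 := by
      have : 288 * B * C' * D = 0 := by linear_combination e8
      simpa [hD, mul_eq_zero] using this
    have hC : C' ≠ 0 := by
      intro hC
      rw [hC] at e10
      norm_num at e10
    have hA : A = 0 := (mul_eq_zero.1 hAC).resolve_right hC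
    have hB : B = 0 := (mul_eq_zero.1 hBC).resolve_right hC
    refine ⟨1, ⟨hA, hB, rfl, rfl, by rw [hA, hB] at e10; linear_combination -e10⟩, ?_⟩
    intro j hj
    fin_cases j
    · exact absurd hj.1 hD
    · rfl
    · exact absurd hj.2.2.1 hD
    · exact absurd hj.2.2.1 hD
  · -- D ≠ 0, E = 0, F ≠ 0 : contradiction
    exfalso
    have hB : B = 0 := by
      rcases hp2 with (h' | h') | h'
      exacts [absurd h' hD, h', absurd h' hF]
    rw [hB, hE] at e5
    have : D ^ 2 * F = 0 := by linear_combination (-1/24 : ℂ) * e5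
    rcases mul_eq_zero.1 this with h' | h'
    · exact hD (pow_eq_zero_iff (by norm_num) |>.1 h')
    · exact hF h'
  · -- D ≠ 0, E ≠ 0, F = 0 : contradiction
    exfalso
    have hA : A = 0 := by
      rcases hp1 with (h' | h') | h'
      exacts [h', absurd h' hD, absurd h' hE]
    rw [hA, hF] at e4
    have : D ^ 2 * E = 0 := by linear_combination (-1/24 : ℂ) * e4
    rcases mul_eq_zero.1 this with h' | h'
    · exact hD (pow_eq_zero_iff (by norm_num) |>.1 h')
    · exact hE h'
  · -- D ≠ 0, E ≠ 0, F ≠ 0 : contradiction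
    exfalso
    have hA : A = 0 := by
      rcases hp1 with (h' | h') | h'
      exacts [h', absurd h' hD, absurd h' hE]
    rw [hA] at e4
    have : D ^ 2 * E = 0 := by linear_combination (-1/24 : ℂ) * e4
    rcases mul_eq_zero.1 this with h' | h'
    · exact hD (pow_eq_zero_iff (by norm_num) |>.1 h')
    · exact hE h'
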